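/- Let R be a semiprime ring, let {I_α : α ∈ S} be a family of ideals of R, and let J be a right annihilator ideal of R. Then J ∩ r(l(∑_{α∈S} I_α)) = r(l(∑_{α∈S} (I_α ∩ J))). -/

import Mathlib

open TwoSidedIdeal

/-- Left annihilator of a set: `l(S) = {x | ∀ s ∈ S, x*s = 0}`. -/
def lAnn (R : Type*) [Ring R] (S : Set R) : Set R := {x | ∀ s ∈ S, x * s = 0}

/-- Right annihilator of a set: `r(S) = {x | ∀ s ∈ S, s*x = 0}`. -/
def rAnn (R : Type*) [Ring R] (S : Set R) : Set R := {x | ∀ s ∈ S, s * x = 0}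

/-- A ring is semiprime if `I² = 0` implies `I = 0` for every two-sided ideal `I`. -/
def IsSemiprimeRing (R : Type*) [Ring R] : Prop :=
  ∀ I : TwoSidedIdeal R, (∀ a ∈ I, ∀ b ∈ I, a * b = 0) → I = ⊥

/-- A two-sided ideal `P` is prime if it is proper and `IJ ⊆ P` implies `I ⊆ P` or `J ⊆ P`. -/
def IsPrimeTSI {R : Type*} [Ring R] (P : TwoSidedIdeal R) : Prop :=
  P ≠ ⊤ ∧ ∀ I J : TwoSidedIdeal R, (∀ a ∈ I, ∀ b ∈ J, a * b ∈ P) → I ≤ P ∨ J ≤ P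

/-- A minimal prime ideal: a prime two-sided ideal minimal among primes. -/
def IsMinPrime {R : Type*} [Ring R] (P : TwoSidedIdeal R) : Prop :=
  IsPrimeTSI P ∧ ∀ Q : TwoSidedIdeal R, IsPrimeTSI Q → Q ≤ P → Q = P

/-- `Pmin R B` is the intersection of all minimal prime ideals of `R` containing the set `B`
(equal to all of `R` if there are none). -/
def Pmin (R : Type*) [Ring R] (B : Set R) : Set R :=
  ⋂ P ∈ {P : TwoSidedIdeal R | IsMinPrime P ∧ B ⊆ (P : Set R)}, (P : Set R)

/-- `Pa a` : the intersection of all minimal prime ideals containing `a`. -/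
def Pa {R : Type*} [Ring R] (a : R) : Set R := Pmin R {a}

/-- An ideal `I` is a z°-ideal if `P_a ⊆ I` for every `a ∈ I`. -/
def IsZoIdeal {R : Type*} [Ring R] (I : TwoSidedIdeal R) : Prop :=
  ∀ a ∈ I, Pa a ⊆ (I : Set R)

/-- An ideal `I` is a right d-ideal if `r(l(RaR)) ⊆ I` for every `a ∈ I`. -/
def IsRightDIdeal {R : Type*} [Ring R] (I : TwoSidedIdeal R) : Prop :=
  ∀ a ∈ I, rAnn R (lAnn R (span {a} : Set R)) ⊆ (I : Set R)

/-- An ideal `I` is a right annihilator ideal if `I = r(l(I))`. -/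
def IsRightAnnIdeal {R : Type*} [Ring R] (I : TwoSidedIdeal R) : Prop :=
  (I : Set R) = rAnn R (lAnn R (I : Set R))

open Pointwise in
lemma semiprime_aux {R : Type*} [Ring R] (hR : IsSemiprimeRing R) (z : R)
    (h : ∀ r : R, z * r * z = 0) : z = 0 := by
  have gen : ∀ x ∈ (Set.univ * {z} * Set.univ : Set R),
      ∀ y ∈ (Set.univ * {z} * Set.univ : Set R), x * y = 0 := by
    rintro - ⟨-, ⟨r, -, w, hw, rfl⟩, s, -, rfl⟩
           - ⟨-, ⟨r', -, w', hw', rfl⟩, s', -, rfl⟩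
    rw [Set.mem_singleton_iff] at hw hw'
    rw [hw, hw']
    have hz := h (s * r')
    calc r * z * s * (r' * z * s') = r * (z * (s * r') * z) * s' := by noncomm_ring
    _ = 0 := by rw [hz]; noncomm_ring
  have key : ∀ a ∈ TwoSidedIdeal.span ({z} : Set R),
      ∀ b ∈ TwoSidedIdeal.span ({z} : Set R), a * b = 0 := by
    intro a ha b hb
    rw [TwoSidedIdeal.mem_span_iff_mem_addSubgroup_closure] at ha hb
    induction ha using AddSubgroup.closure_induction with
    | mem a ha =>
      induction hb using AddSubgroup.closure_induction with
      | mem b hb => exact gen a ha b hb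
      | zero => simp
      | add b1 b2 _ _ ih1 ih2 => rw [mul_add, ih1, ih2, add_zero]
      | neg b _ ih => rw [mul_neg, ih, neg_zero]
    | zero => simp
    | add a1 a2 _ _ ih1 ih2 => rw [add_mul, ih1, ih2, add_zero]
    | neg a _ ih => rw [neg_mul, ih, neg_zero]
  have hbot := hR _ key
  have hz : z ∈ TwoSidedIdeal.span ({z} : Set R) :=
    TwoSidedIdeal.subset_span (Set.mem_singleton z)
  rw [hbot, TwoSidedIdeal.mem_bot] at hz
  exact hz

/-- Lemma 5.2: in a semiprime ring, for any family `{I_α}` of ideals and any right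
annihilator ideal `J`, `J ∩ r(l(∑_α I_α)) = r(l(∑_α (I_α ∩ J)))`. -/
theorem stmt12 (R : Type*) [Ring R] (hR : IsSemiprimeRing R)
    {ι : Type*} (I : ι → TwoSidedIdeal R) (J : TwoSidedIdeal R)
    (hJ : IsRightAnnIdeal J) :
    (J : Set R) ∩ rAnn R (lAnn R ((⨆ α, I α : TwoSidedIdeal R) : Set R)) =
      rAnn R (lAnn R ((⨆ α, (I α ⊓ J) : TwoSidedIdeal R) : Set R)) := by
  set A : TwoSidedIdeal R := ⨆ α, I α with hA
  set B : TwoSidedIdeal R := ⨆ α, (I α ⊓ J) with hB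
  have hBJ : B ≤ J := iSup_le fun α => inf_le_right
  have hBA : B ≤ A := iSup_le fun α => le_trans inf_le_left (le_iSup I α)
  apply Set.Subset.antisymm
  · -- J ∩ r(l(A)) ⊆ r(l(B))
    rintro x ⟨hxJ, hxA⟩ y hy
    -- hy : y ∈ lAnn R B
    -- step 1: ∀ a ∈ A, ∀ j ∈ J, y * (j * a) = 0
    have step1 : ∀ a ∈ A, ∀ j ∈ J, y * (j * a) = 0 := by
      let K : TwoSidedIdeal R := TwoSidedIdeal.mk'
        {a : R | ∀ j ∈ J, y * (j * a) = 0}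
        (by intro j hj; simp)
        (by intro a b ha hb j hj
            rw [mul_add, mul_add, ha j hj, hb j hj, add_zero])
        (by intro a ha j hj; rw [mul_neg, mul_neg, ha j hj, neg_zero])
        (by intro r a ha j hj
            rw [show j * (r * a) = (j * r) * a by rw [mul_assoc]]
            exact ha (j * r) (J.mul_mem_right _ _ hj))
        (by intro a r ha j hj
            rw [show j * (a * r) = (j * a) * r by rw [mul_assoc],
              ← mul_assoc, ha j hj, zero_mul])
      have hAK : A ≤ K := iSup_le fun α a ha => by
        rw [TwoSidedIdeal.mem_mk']
        intro j hj
        have : j * a ∈ B := hB ▸ (le_iSup (fun α => I α ⊓ J) α)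
          ((TwoSidedIdeal.mem_inf _).mpr
            ⟨(I α).mul_mem_left _ _ ha, J.mul_mem_right _ _ hj⟩)
        exact hy _ this
      intro a ha j hj
      have := hAK ha
      rw [TwoSidedIdeal.mem_mk'] at this
      exact this j hj
    -- step 2: ∀ j ∈ J, (y * j) * x = 0
    have step2 : ∀ j ∈ J, (y * j) * x = 0 := by
      intro j hj
      exact hxA (y * j) fun a ha => by rw [mul_assoc]; exact step1 a ha j hj
    -- step 3: (y*x) R (y*x) = 0
    have step3 : ∀ r : R, (y * x) * r * (y * x) = 0 := by
      intro r
      have hmem : x * (r * y) ∈ J := J.mul_mem_right _ _ hxJ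
      have h2 := step2 _ hmem
      calc (y * x) * r * (y * x) = (y * (x * (r * y))) * x := by noncomm_ring
      _ = 0 := h2
    exact semiprime_aux hR _ step3
  · -- r(l(B)) ⊆ J ∩ r(l(A))
    intro x hx
    constructor
    · rw [hJ]
      intro y hy
      exact hx y fun b hb => hy b (hBJ hb)
    · intro y hy
      exact hx y fun b hb => hy b (hBA hb)
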